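/- For p ∈ (0,1], define Q(p) = 4(1−p)² / (4 − 2p + p²). Then Q(p) = 1 − 3p(2−p)/(4 − p(2−p)), and Q(p) ∈ [0,1) for all p ∈ (0,1]. Consequently, if local depolarizing noise with per-qubit error probability p acts in L layers on n qubits and causes cost concentration ⟨ΔC̃⟩ = A·q^L·⟨ΔC⟩ for constants A > 0 and q ∈ (0,1), then the optimal Probabilistic Error Cancellation scheme mitigating every noisy gate — whose total error mitigation cost is the nL-fold product γ_tot = (1/Q(p))^{nL} of the single-qubit costs and which corrects the noise exactly — yields average relative resolvability χ̄ = (1/(A²q^{2L}))·Q(p)^{nL}, which for fixed p ∈ (0,1] decays exponentially in n·L relative to the concentration factor; in particular the relative resolvability has unfavourable scaling with system size under noise-induced barren plateau scaling. -/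

import Mathlib

/-- **Proposition 6** (scaling of Probabilistic Error Cancellation with local
depolarizing noise). The single-qubit factor `Q(p) = 4(1-p)²/(4-2p+p²)` equals
`1 - 3p(2-p)/(4-p(2-p))` and lies in `[0,1)` for `p ∈ (0,1]`. Consequently,
under cost concentration `⟨ΔC̃⟩ = A q^L ⟨ΔC⟩`, the optimal PEC scheme mitigating
all `nL` noisy qubit-layers, with total error mitigation cost
`γ_tot = (1/Q(p))^{nL}` and exact correction `ΔC_m = ΔC`, yields average
relative resolvability `χ̄ = (1/γ_tot)(⟨ΔC⟩/⟨ΔC̃⟩)² = (1/(A²q^{2L})) Q(p)^{nL}`. -/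
theorem pec_local_depolarizing_scaling
    (p : ℝ) (hp0 : 0 < p) (hp1 : p ≤ 1) :
    4 * (1 - p) ^ 2 / (4 - 2 * p + p ^ 2) = 1 - 3 * p * (2 - p) / (4 - p * (2 - p)) ∧
    0 ≤ 4 * (1 - p) ^ 2 / (4 - 2 * p + p ^ 2) ∧
    4 * (1 - p) ^ 2 / (4 - 2 * p + p ^ 2) < 1 ∧
    ∀ (A q : ℝ) (n L : ℕ) (ΔC : ℝ), 0 < A → 0 < q → q < 1 → ΔC ≠ 0 →
      (1 / ((1 / (4 * (1 - p) ^ 2 / (4 - 2 * p + p ^ 2))) ^ (n * L))) *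
          (ΔC / (A * q ^ L * ΔC)) ^ 2 =
        (1 / (A ^ 2 * q ^ (2 * L))) * (4 * (1 - p) ^ 2 / (4 - 2 * p + p ^ 2)) ^ (n * L) := by
  have hden : (0:ℝ) < 4 - 2 * p + p ^ 2 := by nlinarith
  refine ⟨?_, ?_, ?_, ?_⟩
  · have hden' : (4:ℝ) - p * (2 - p) ≠ 0 := by nlinarith
    rw [eq_sub_iff_add_eq, div_add_div _ _ hden.ne' hden', div_eq_one_iff_eq (mul_ne_zero hden.ne' hden')]
    ring
  · positivity
  · rw [div_lt_one hden]; nlinarith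
  · intro A q n L ΔC hA hq hq1 hC
    have hqL : q ^ L ≠ 0 := pow_ne_zero _ hq.ne'
    have h1 : (1 / (4 * (1 - p) ^ 2 / (4 - 2 * p + p ^ 2))) ^ (n * L) =
        1 / (4 * (1 - p) ^ 2 / (4 - 2 * p + p ^ 2)) ^ (n * L) := by
      rw [one_div, one_div, inv_pow]
    rw [h1, one_div_one_div]
    have h2 : (ΔC / (A * q ^ L * ΔC)) ^ 2 = 1 / (A ^ 2 * q ^ (2 * L)) := by
      rw [eq_div_iff (by positivity)]
      have : q ^ (2 * L) = (q ^ L) ^ 2 := by rw [← pow_mul, Nat.mul_comm]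
      rw [this]
      field_simp
    rw [h2]; ring
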